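/- If NPr^ε(μ) holds for all cardinals μ < λ and cf(λ) = ω, then NPr^ε(λ) holds. -/

import Mathlib

open FirstOrder Cardinal

/-- The increasing enumeration of a finite set in a linear order. -/
noncomputable def enumFun {M : Type*} [LinearOrder M] (w : Finset M) : Fin w.card → M :=
  fun i => (w.orderIsoOfFin rfl i : M)

/-- `rk(w,𝕄) ≥ 0`. -/
def rkBase (L : Language) (M : Type*) [LinearOrder M] [L.Structure M] (w : Finset M) : Prop :=
  ∀ φ : L.Formula (Fin w.card), φ.IsQF → ∀ k : Fin w.card,
    φ.Realize (enumFun w) →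
      ¬ ({α : M | φ.Realize (Function.update (enumFun w) k α)}).Countable

/-- Successor step of the splitting rank. -/
def rkSucc (L : Language) (M : Type*) [LinearOrder M] [L.Structure M]
    (IH : Finset M → Prop) (w : Finset M) : Prop :=
  ∀ φ : L.Formula (Fin w.card), φ.IsQF → ∀ k : Fin w.card,
    φ.Realize (enumFun w) →
      ∃ α : M, α ∉ w ∧ IH (insert α w) ∧ φ.Realize (Function.update (enumFun w) k α)

/-- The splitting rank relation `rk(w,𝕄) ≥ δ`. -/
noncomputable def rkGe (L : Language) (M : Type*) [LinearOrder M] [L.Structure M]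
    (δ : Ordinal) : Finset M → Prop :=
  Ordinal.limitRecOn δ (rkBase L M) (fun _ IH => rkSucc L M IH)
    (fun _ _ IH w => ∀ γ (hγ : γ < _), IH γ hγ w)

/-- `NPr^ε(λ)`: there is a model with universe of cardinality `λ` in a countable vocabulary
all of whose nonempty finite subsets `w` satisfy `1 + rk(w) ≤ ε`. -/
def NPr (ε : Ordinal) (lam : Cardinal) : Prop :=
  ∃ (M : Type) (instO : LinearOrder M) (L : FirstOrder.Language.{0, 0}) (instS : L.Structure M),
    Cardinal.mk M = lam ∧ L.card ≤ Cardinal.aleph0 ∧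
    ∀ w : Finset M, w.Nonempty → ∀ δ : Ordinal, @rkGe L M instO instS δ w → 1 + δ ≤ ε

/-! ### Auxiliary lemmas -/

section RkGeLemmas

variable (L : Language) (M : Type*) [LinearOrder M] [L.Structure M]

lemma rkGe_zero : rkGe L M 0 = rkBase L M :=
  Ordinal.limitRecOn_zero _ _ _

lemma rkGe_succ (o : Ordinal) :
    rkGe L M (Order.succ o) = rkSucc L M (rkGe L M o) :=
  Ordinal.limitRecOn_succ _ _ _ _

lemma rkGe_limit (o : Ordinal) (ho : Order.IsSuccLimit o) :
    rkGe L M o = fun w => ∀ γ (_ : γ < o), rkGe L M γ w :=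
  Ordinal.limitRecOn_limit _ _ _ _ ho

end RkGeLemmas

lemma enumFun_injective {M : Type*} [LinearOrder M] (w : Finset M) :
    Function.Injective (enumFun w) := fun i j hij => by
  exact (w.orderIsoOfFin rfl).injective (Subtype.coe_injective hij)

lemma isQF_onBoundedFormula {L L' : Language} (ϕ : L →ᴸ L') {α : Type*} {k : ℕ}
    {φ : L.BoundedFormula α k} (h : φ.IsQF) : (ϕ.onBoundedFormula φ).IsQF := by
  induction h with
  | falsum => exact Language.BoundedFormula.isQF_bot
  | of_isAtomic ha => cases ha with
    | equal t₁ t₂ => exact (Language.BoundedFormula.IsAtomic.equal _ _).isQF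
    | rel R ts => exact (Language.BoundedFormula.IsAtomic.rel _ _).isQF
  | imp _ _ ih1 ih2 => exact ih1.imp ih2

namespace NPrGlue

open FirstOrder.Language

variable (Ln : ℕ → FirstOrder.Language.{0, 0}) (Mn : ℕ → Type)

/-- The glued language: disjoint union of the languages, plus a unary predicate for each piece
(added at every arity for simplicity). -/
def Lg : FirstOrder.Language.{0, 0} where
  Functions m := Σ n : ℕ, (Ln n).Functions m
  Relations m := (Σ n : ℕ, (Ln n).Relations m) ⊕ ℕ

/-- The glued universe. -/
abbrev Mg : Type := Σ n : ℕ, Mn n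

/-- Inclusion of a piece. -/
def inM (n : ℕ) (a : Mn n) : Mg Mn := ⟨n, a⟩

lemma inM_injective {n : ℕ} : Function.Injective (inM Mn n) :=
  sigma_mk_injective

variable [iO : ∀ n, LinearOrder (Mn n)] [iS : ∀ n, (Ln n).Structure (Mn n)]

noncomputable instance instLinMg : LinearOrder (Mg Mn) :=
  LinearOrder.lift' (toLex : Mg Mn → Σₗ n, Mn n) toLex.injective

open scoped Classical in
/-- The glued structure. -/
noncomputable instance strMg : (Lg Ln).Structure (Mg Mn) where
  funMap {m} f x :=
    if h : ∃ y : Fin m → Mn f.1, x = inM Mn f.1 ∘ y then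
      ⟨f.1, Structure.funMap f.2 h.choose⟩
    else
      x ⟨0, Nat.pos_of_ne_zero (by
        rintro rfl
        exact h ⟨finZeroElim, funext finZeroElim⟩)⟩
  RelMap {m} R x :=
    match R with
    | Sum.inl R' => ∃ y : Fin m → Mn R'.1, x = inM Mn R'.1 ∘ y ∧ Structure.RelMap R'.2 y
    | Sum.inr n => ∀ i, (x i).1 = n

lemma funMap_inM {n m : ℕ} (f : (Ln n).Functions m) (y : Fin m → Mn n) :
    Structure.funMap (L := Lg Ln) (⟨n, f⟩ : Σ n, (Ln n).Functions m) (inM Mn n ∘ y)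
      = inM Mn n (Structure.funMap f y) := by
  classical
  show (if h : ∃ y' : Fin m → Mn n, inM Mn n ∘ y = inM Mn n ∘ y' then
      (⟨n, Structure.funMap f h.choose⟩ : Mg Mn)
    else _) = _
  rw [dif_pos ⟨y, rfl⟩]
  have h : ∃ y' : Fin m → Mn n, inM Mn n ∘ y = inM Mn n ∘ y' := ⟨y, rfl⟩
  have hy : h.choose = y := funext fun i => inM_injective Mn (congrFun h.choose_spec i).symm
  rw [hy]
  rfl

lemma relMap_inl {n m : ℕ} (R : (Ln n).Relations m) (x : Fin m → Mg Mn) :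
    Structure.RelMap (L := Lg Ln) (Sum.inl ⟨n, R⟩ : (Σ n, (Ln n).Relations m) ⊕ ℕ) x ↔
      ∃ y : Fin m → Mn n, x = inM Mn n ∘ y ∧ Structure.RelMap R y :=
  Iff.rfl

lemma relMap_inr {n m : ℕ} (x : Fin m → Mg Mn) :
    Structure.RelMap (L := Lg Ln) (Sum.inr n : (Σ n, (Ln n).Relations m) ⊕ ℕ) x ↔
      ∀ i, (x i).1 = n :=
  Iff.rfl

/-- The inclusion of languages. -/
def lhom (n : ℕ) : Ln n →ᴸ Lg Ln where
  onFunction := fun {_} f => ⟨n, f⟩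
  onRelation := fun {_} R => Sum.inl ⟨n, R⟩

/-- The reduct structure of the glued model for each piece's language. -/
noncomputable abbrev redStr (n : ℕ) : (Ln n).Structure (Mg Mn) :=
  (lhom Ln n).reduct (Mg Mn)

/-- The inclusion as a first-order embedding for the reduct structure. -/
noncomputable def emb (n : ℕ) :
    @Language.Embedding (Ln n) (Mn n) (Mg Mn) (iS n) (redStr Ln Mn n) :=
  letI := redStr Ln Mn n
  { toFun := inM Mn n
    inj' := inM_injective Mn
    map_fun' := fun {m} f y => (funMap_inM Ln Mn f y).symm
    map_rel' := fun {m} R y => by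
      rw [show (Structure.RelMap (M := Mg Mn) R : (Fin m → Mg Mn) → Prop)
          = Structure.RelMap (L := Lg Ln) (Sum.inl ⟨n, R⟩) from rfl, relMap_inl]
      constructor
      · rintro ⟨y', hy', hR⟩
        obtain rfl : y' = y := funext fun i => inM_injective Mn (congrFun hy' i).symm
        exact hR
      · intro hR
        exact ⟨y, rfl, hR⟩ }

lemma realize_emb {n : ℕ} {c : ℕ} {ψ : (Ln n).Formula (Fin c)} (hψ : ψ.IsQF)
    (u : Fin c → Mn n) :
    (@Formula.Realize (Ln n) (Mg Mn) (redStr Ln Mn n) _ ψ (inM Mn n ∘ u) ↔ ψ.Realize u) := by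
  letI := redStr Ln Mn n
  have h := BoundedFormula.IsQF.realize_embedding hψ (emb Ln Mn n) (v := u)
    (xs := (default : Fin 0 → Mn n))
  have e0 : (⇑(emb Ln Mn n) ∘ (default : Fin 0 → Mn n)) = (default : Fin 0 → Mg Mn) :=
    Subsingleton.elim _ _
  rw [e0] at h
  exact h


section Glue

variable {Ln Mn}

/-- The part of `w` living in piece `n`. -/
noncomputable def pre (w : Finset (Mg Mn)) (n : ℕ) : Finset (Mn n) :=
  w.preimage (inM Mn n) (inM_injective Mn).injOn

lemma mem_pre {w : Finset (Mg Mn)} {n : ℕ} {a : Mn n} :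
    a ∈ pre w n ↔ inM Mn n a ∈ w :=
  Finset.mem_preimage

lemma pre_insert {w : Finset (Mg Mn)} {n : ℕ} (β : Mn n) :
    pre (insert (inM Mn n β) w) n = insert β (pre w n) := by
  ext a
  simp only [mem_pre, Finset.mem_insert, (inM_injective Mn).eq_iff]

lemma exists_enum {M : Type*} [LinearOrder M] {w : Finset M} {x : M} (hx : x ∈ w) :
    ∃ i, enumFun w i = x := by
  obtain ⟨i, hi⟩ := (w.orderIsoOfFin rfl).surjective ⟨x, hx⟩
  exact ⟨i, congrArg Subtype.val hi⟩

/-- The index map from the enumeration of `pre w n` to the enumeration of `w`. -/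
noncomputable def rho (w : Finset (Mg Mn)) (n : ℕ) (i : Fin (pre w n).card) : Fin w.card :=
  (exists_enum (mem_pre.mp ((pre w n).orderIsoOfFin rfl i).2
    : inM Mn n (enumFun (pre w n) i) ∈ w)).choose

lemma enum_rho {w : Finset (Mg Mn)} {n : ℕ} (i : Fin (pre w n).card) :
    enumFun w (rho w n i) = inM Mn n (enumFun (pre w n) i) :=
  (exists_enum (mem_pre.mp ((pre w n).orderIsoOfFin rfl i).2
    : inM Mn n (enumFun (pre w n) i) ∈ w)).choose_spec

lemma rho_inj {w : Finset (Mg Mn)} {n : ℕ} : Function.Injective (rho w n) := by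
  intro i j hij
  have h := congrArg (enumFun w) hij
  rw [enum_rho, enum_rho] at h
  exact enumFun_injective _ (inM_injective Mn h)

lemma update_comp {w : Finset (Mg Mn)} {n : ℕ} (k : Fin (pre w n).card) (β : Mn n) :
    Function.update (enumFun w) (rho w n k) (inM Mn n β) ∘ rho w n
      = inM Mn n ∘ Function.update (enumFun (pre w n)) k β := by
  funext j
  by_cases hj : j = k
  · subst hj
    simp
  · rw [Function.comp_apply, Function.comp_apply,
      Function.update_of_ne (fun hc => hj (rho_inj hc)), Function.update_of_ne hj, enum_rho]

variable (Ln) in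
/-- The lift of a quantifier-free formula about piece `n` to the glued structure. -/
noncomputable def liftF (w : Finset (Mg Mn)) (n : ℕ)
    (ψ : (Ln n).Formula (Fin (pre w n).card)) (k : Fin (pre w n).card) :
    (Lg Ln).Formula (Fin w.card) :=
  ((lhom Ln n).onFormula (ψ.relabel (rho w n))) ⊓
    (Relations.formula (L := Lg Ln) (n := 1) (Sum.inr n) ![Term.var (rho w n k)])

lemma liftF_isQF {w : Finset (Mg Mn)} {n : ℕ}
    {ψ : (Ln n).Formula (Fin (pre w n).card)} (hψ : ψ.IsQF) (k : Fin (pre w n).card) :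
    (liftF Ln w n ψ k).IsQF :=
  (isQF_onBoundedFormula _ (hψ.relabel _)).inf (BoundedFormula.IsAtomic.rel _ _).isQF

lemma liftF_fst {w : Finset (Mg Mn)} {n : ℕ}
    {ψ : (Ln n).Formula (Fin (pre w n).card)} {k : Fin (pre w n).card}
    {v : Fin w.card → Mg Mn} (hv : (liftF Ln w n ψ k).Realize v) :
    (v (rho w n k)).1 = n := by
  rw [liftF, Formula.realize_inf] at hv
  have h := (relMap_inr Ln Mn _).mp (Formula.realize_rel.mp hv.2) 0
  simpa using h

lemma realize_liftF {w : Finset (Mg Mn)} {n : ℕ}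
    {ψ : (Ln n).Formula (Fin (pre w n).card)} (hψ : ψ.IsQF) {k : Fin (pre w n).card}
    (u : Fin (pre w n).card → Mn n) (v : Fin w.card → Mg Mn)
    (hv : v ∘ rho w n = inM Mn n ∘ u) :
    (liftF Ln w n ψ k).Realize v ↔ ψ.Realize u := by
  letI := redStr Ln Mn n
  haveI : ((lhom Ln n).IsExpansionOn (Mg Mn)) := Language.LHom.isExpansionOn_reduct _ _
  rw [liftF, Formula.realize_inf, Language.LHom.realize_onFormula, Formula.realize_relabel,
    hv, realize_emb Ln Mn hψ u]
  refine and_iff_left ?_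
  refine Formula.realize_rel.mpr ((relMap_inr Ln Mn _).mpr ?_)
  intro i
  have hk : v (rho w n k) = inM Mn n (u k) := congrFun hv k
  simp [hk, inM]

/-- The key transfer lemma: if `w` has rank at least `δ` in the glued structure, then its part
in piece `n` has rank at least `δ` in the `n`-th structure. -/
theorem transfer (δ : Ordinal) :
    ∀ w : Finset (Mg Mn), rkGe (Lg Ln) (Mg Mn) δ w →
      ∀ n : ℕ, @rkGe (Ln n) (Mn n) (iO n) (iS n) δ (pre w n) := by
  induction δ using Ordinal.limitRecOn with
  | zero =>
    intro w hw n
    rw [rkGe_zero] at hw ⊢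
    intro ψ hψ k hRe
    have hEρ : enumFun w ∘ rho w n = inM Mn n ∘ enumFun (pre w n) :=
      funext fun i => enum_rho i
    have hφw : (liftF Ln w n ψ k).Realize (enumFun w) :=
      (realize_liftF hψ (enumFun (pre w n)) _ hEρ).mpr hRe
    have hbig := hw (liftF Ln w n ψ k) (liftF_isQF hψ k) (rho w n k) hφw
    intro hcnt
    apply hbig
    refine Set.Countable.mono ?_ (hcnt.image (inM Mn n))
    rintro ⟨n', β⟩ hα
    have hfst := liftF_fst hα
    rw [Function.update_self] at hfst
    dsimp at hfst
    subst hfst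
    refine ⟨β, ?_, rfl⟩
    exact (realize_liftF hψ (Function.update (enumFun (pre w n')) k β) _ (update_comp k β)).mp hα
  | add_one δ IH =>
    intro w hw n
    rw [Ordinal.add_one_eq_succ, rkGe_succ] at hw ⊢
    intro ψ hψ k hRe
    have hEρ : enumFun w ∘ rho w n = inM Mn n ∘ enumFun (pre w n) :=
      funext fun i => enum_rho i
    have hφw : (liftF Ln w n ψ k).Realize (enumFun w) :=
      (realize_liftF hψ (enumFun (pre w n)) _ hEρ).mpr hRe
    obtain ⟨α, hαw, hrk', hreal⟩ := hw (liftF Ln w n ψ k) (liftF_isQF hψ k) (rho w n k) hφw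
    obtain ⟨n', β⟩ := α
    have hfst := liftF_fst hreal
    rw [Function.update_self] at hfst
    dsimp at hfst
    subst hfst
    refine ⟨β, fun hβ => hαw (mem_pre.mp hβ), ?_, ?_⟩
    · have h2 := IH _ hrk' n'
      convert h2 using 1
      ext a
      simp only [mem_pre, Finset.mem_insert]
      rw [show (inM Mn n' a = ⟨n', β⟩) ↔ a = β from ⟨fun hh => inM_injective Mn hh, fun hh => by rw [hh]; rfl⟩]
    · exact (realize_liftF hψ (Function.update (enumFun (pre w n')) k β) _
        (update_comp k β)).mp hreal
  | limit o ho IH =>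
    intro w hw n
    rw [rkGe_limit _ _ o ho] at hw ⊢
    intro γ hγ
    exact IH γ hγ w (hw γ hγ) n

end Glue

end NPrGlue

/-- If `NPr^ε(μ)` holds for all `μ < λ` and `cf(λ) = ω`, then `NPr^ε(λ)` holds. -/
theorem stmt_8 (ε : Ordinal) (lam : Cardinal)
    (h : ∀ μ : Cardinal, μ < lam → NPr ε μ)
    (hcf : lam.ord.cof = Cardinal.aleph0) : NPr ε lam := by
  have haleph : Cardinal.aleph0 ≤ lam := by
    have h1 := Ordinal.cof_ord_le lam
    rwa [hcf] at h1
  obtain ⟨ι, f, hf, hι⟩ := Ordinal.exists_lsub_cof lam.ord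
  rw [hcf] at hι
  obtain ⟨e⟩ : Nonempty (ℕ ≃ ι) := Cardinal.eq.mp (by rw [Cardinal.mk_nat, hι])
  set μ : ℕ → Cardinal := fun n => (f (e n)).card with hμdef
  have hμ : ∀ n, μ n < lam := fun n =>
    Cardinal.lt_ord.mp (by rw [← hf]; exact Ordinal.lt_lsub f (e n))
  choose Mt iOn Lt iSn hcard hLcard hrk using fun n => h (μ n) (hμ n)
  have hall : ∀ κ : Cardinal, κ < lam → ∃ n, κ ≤ μ n := by
    intro κ hκ
    have h1 : κ.ord < Ordinal.lsub f := by rw [hf]; exact Cardinal.ord_lt_ord.mpr hκ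
    obtain ⟨i, hi⟩ := Ordinal.lt_lsub_iff.mp h1
    refine ⟨e.symm i, ?_⟩
    have h2 : κ.ord.card ≤ (f i).card := Ordinal.card_le_card hi
    rw [Cardinal.card_ord] at h2
    simpa [hμdef, e.apply_symm_apply] using h2
  have hsup : lam ≤ ⨆ n, μ n := by
    by_contra hs
    push_neg at hs
    have hssucc : Order.succ (⨆ n, μ n) < lam := by
      rcases lt_or_ge (⨆ n, μ n) Cardinal.aleph0 with hA | hA
      · have h3 : Order.succ (⨆ n, μ n) < Cardinal.aleph0 := by
          rw [Cardinal.succ_eq_of_lt_aleph0 hA]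
          exact Cardinal.add_lt_aleph0 hA Cardinal.one_lt_aleph0
        exact h3.trans_le haleph
      · by_contra hss
        push_neg at hss
        have hlam : lam = Order.succ (⨆ n, μ n) := le_antisymm hss (Order.succ_le_of_lt hs)
        have hreg := (Cardinal.isRegular_succ hA).cof_eq
        rw [← hlam, hcf] at hreg
        have h4 : (⨆ n, μ n) < Cardinal.aleph0 := by
          rw [hreg, hlam]
          exact Order.lt_succ _
        exact absurd h4 (not_lt.mpr hA)
    obtain ⟨n, hn⟩ := hall _ hssucc
    exact (Order.lt_succ (⨆ n, μ n)).not_ge (hn.trans (le_ciSup (Cardinal.bddAbove_range μ) n))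
  have hsup' : (⨆ n, μ n) = lam := le_antisymm (ciSup_le fun n => (hμ n).le) hsup
  have hsum : Cardinal.sum μ = lam := by
    apply le_antisymm
    · refine (Cardinal.sum_le_mk_mul_iSup μ).trans ?_
      rw [Cardinal.mk_nat, hsup']
      exact le_of_eq (Cardinal.mul_eq_right haleph haleph Cardinal.aleph0_ne_zero)
    · exact hsup.trans (ciSup_le fun n => Cardinal.le_sum μ n)
  letI iO' : ∀ n, LinearOrder (Mt n) := iOn
  letI iS' : ∀ n, (Lt n).Structure (Mt n) := iSn
  refine ⟨NPrGlue.Mg Mt, inferInstance, NPrGlue.Lg Lt, inferInstance, ?_, ?_, ?_⟩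
  · have h5 : (fun n => Cardinal.mk (Mt n)) = μ := funext fun n => hcard n
    rw [Cardinal.mk_sigma, h5, hsum]
  · haveI hCS : ∀ n, Countable (Lt n).Symbols := fun n => Cardinal.mk_le_aleph0_iff.mp (hLcard n)
    haveI hCF : ∀ n m, Countable ((Lt n).Functions m) := fun n m =>
      Function.Injective.countable
        (f := fun fs : (Lt n).Functions m => (Sum.inl ⟨m, fs⟩ : (Lt n).Symbols))
        (fun a b hab => sigma_mk_injective (Sum.inl_injective hab))
    haveI hCR : ∀ n m, Countable ((Lt n).Relations m) := fun n m =>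
      Function.Injective.countable
        (f := fun fs : (Lt n).Relations m => (Sum.inr ⟨m, fs⟩ : (Lt n).Symbols))
        (fun a b hab => sigma_mk_injective (Sum.inr_injective hab))
    haveI hGF : ∀ l, Countable ((NPrGlue.Lg Lt).Functions l) := fun l =>
      inferInstanceAs (Countable (Σ n, (Lt n).Functions l))
    haveI hGR : ∀ l, Countable ((NPrGlue.Lg Lt).Relations l) := fun l =>
      inferInstanceAs (Countable ((Σ n, (Lt n).Relations l) ⊕ ℕ))
    haveI : Countable (NPrGlue.Lg Lt).Symbols :=
      inferInstanceAs (Countable ((Σ l, (NPrGlue.Lg Lt).Functions l) ⊕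
        (Σ l, (NPrGlue.Lg Lt).Relations l)))
    exact Cardinal.mk_le_aleph0
  · intro w hw δ hδ
    obtain ⟨a, ha⟩ := hw
    have ht := NPrGlue.transfer δ w hδ a.1
    exact hrk a.1 _ ⟨a.2, NPrGlue.mem_pre.mpr ha⟩ δ ht
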